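/- Subordination principle for the pre-Schwarzian norm: let f = h + conj(g) and F = H + conj(G) be harmonic mappings in D with F sense-preserving and ||P_F|| < ∞. If there exists an analytic map φ: D → D with h' = H'∘φ and g' = G'∘φ, then f is sense-preserving, P_f(z) = P_F(φ(z))·φ'(z) for all z ∈ D, and ||P_f|| ≤ ||P_F||. -/

import Mathlib

open Complex Metric

/-- Pre-Schwarzian derivative of an analytic function. -/
noncomputable def pd (F : ℂ → ℂ) (z : ℂ) : ℂ := deriv (deriv F) z / deriv F z

/-- Dilatation of the harmonic mapping `h + conj g`. -/
noncomputable def dil (h g : ℂ → ℂ) (z : ℂ) : ℂ := deriv g z / deriv h z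

/-- Pre-Schwarzian derivative of the harmonic mapping `h + conj g`. -/
noncomputable def PH (h g : ℂ → ℂ) (z : ℂ) : ℂ :=
  pd h z - (starRingEnd ℂ) (dil h g z) * deriv (dil h g) z / ((1 - ‖dil h g z‖ ^ 2 : ℝ) : ℂ)

/-- Pre-Schwarzian norm. -/
noncomputable def pnorm (P : ℂ → ℂ) : ℝ :=
  ⨆ z : Metric.ball (0 : ℂ) 1, (1 - ‖(z : ℂ)‖ ^ 2) * ‖P (z : ℂ)‖

/-- The range whose boundedness expresses finiteness of the pre-Schwarzian norm. -/
def pbdd (P : ℂ → ℂ) : Prop :=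
  BddAbove (Set.range fun z : Metric.ball (0 : ℂ) 1 => (1 - ‖(z : ℂ)‖ ^ 2) * ‖P (z : ℂ)‖)

/-- `h + conj g` is a sense-preserving harmonic mapping in the unit disk. -/
def SPH (h g : ℂ → ℂ) : Prop :=
  DifferentiableOn ℂ h (Metric.ball (0 : ℂ) 1) ∧
  DifferentiableOn ℂ g (Metric.ball (0 : ℂ) 1) ∧ g 0 = 0 ∧
  ∀ z ∈ Metric.ball (0 : ℂ) 1, ‖deriv g z‖ < ‖deriv h z‖


noncomputable def moeb (a : ℂ) (w : ℂ) : ℂ := (a - w) / (1 - (starRingEnd ℂ) a * w)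

lemma normSq_key (a w : ℂ) :
    Complex.normSq (1 - (starRingEnd ℂ) a * w) - Complex.normSq (a - w)
      = (1 - Complex.normSq a) * (1 - Complex.normSq w) := by
  simp only [Complex.normSq_apply, Complex.sub_re, Complex.sub_im, Complex.mul_re,
    Complex.mul_im, Complex.conj_re, Complex.conj_im, Complex.one_re, Complex.one_im]
  ring

lemma denom_ne (a w : ℂ) (ha : ‖a‖ < 1) (hw : ‖w‖ < 1) :
    1 - (starRingEnd ℂ) a * w ≠ 0 := by
  intro hcon
  have h1 : ‖(starRingEnd ℂ) a * w‖ < 1 := by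
    rw [norm_mul, RCLike.norm_conj]
    nlinarith [norm_nonneg a, norm_nonneg w]
  rw [sub_eq_zero] at hcon
  rw [← hcon] at h1; simp at h1
lemma moeb_mapsTo (a : ℂ) (ha : ‖a‖ < 1) :
    Set.MapsTo (moeb a) (ball (0:ℂ) 1) (ball (0:ℂ) 1) := by
  intro w hw
  rw [mem_ball_zero_iff] at hw ⊢
  have hd := denom_ne a w ha hw
  have hdpos : 0 < ‖1 - (starRingEnd ℂ) a * w‖ := norm_pos_iff.2 hd
  rw [moeb, norm_div, div_lt_one hdpos]
  have hkey := normSq_key a w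
  have h1 : Complex.normSq (a - w) = ‖a - w‖ ^ 2 := (Complex.sq_norm _).symm
  have h2 : Complex.normSq (1 - (starRingEnd ℂ) a * w) = ‖1 - (starRingEnd ℂ) a * w‖ ^ 2 :=
    (Complex.sq_norm _).symm
  have h3 : Complex.normSq a = ‖a‖ ^ 2 := (Complex.sq_norm _).symm
  have h4 : Complex.normSq w = ‖w‖ ^ 2 := (Complex.sq_norm _).symm
  have hA : (0:ℝ) < 1 - ‖a‖ ^ 2 := by nlinarith [norm_nonneg a]
  have hW : (0:ℝ) < 1 - ‖w‖ ^ 2 := by nlinarith [norm_nonneg w]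
  nlinarith [norm_nonneg (a - w), mul_pos hA hW, hdpos]

lemma moeb_hasDerivAt (a w : ℂ) (ha : ‖a‖ < 1) (hw : ‖w‖ < 1) :
    HasDerivAt (moeb a) (((starRingEnd ℂ) a * a - 1) / (1 - (starRingEnd ℂ) a * w) ^ 2) w := by
  have hd := denom_ne a w ha hw
  have h1 : HasDerivAt (fun x : ℂ => a - x) (-1) w := by
    simpa using (hasDerivAt_id w).const_sub a
  have h2 : HasDerivAt (fun x : ℂ => 1 - (starRingEnd ℂ) a * x) (-((starRingEnd ℂ) a)) w := by
    simpa using ((hasDerivAt_id w).const_mul ((starRingEnd ℂ) a)).const_sub 1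
  have := h1.div h2 hd
  refine HasDerivAt.congr_deriv this ?_
  ring

lemma moeb_diffOn (a : ℂ) (ha : ‖a‖ < 1) :
    DifferentiableOn ℂ (moeb a) (ball (0:ℂ) 1) := fun w hw =>
  ((moeb_hasDerivAt a w ha (mem_ball_zero_iff.1 hw)).differentiableAt).differentiableWithinAt

lemma moeb_self (a : ℂ) : moeb a a = 0 := by simp [moeb]

lemma moeb_zero (a : ℂ) : moeb a 0 = a := by simp [moeb]

lemma schwarz_pick (φ : ℂ → ℂ) (hφ : DifferentiableOn ℂ φ (ball (0:ℂ) 1))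
    (hmap : Set.MapsTo φ (ball (0:ℂ) 1) (ball (0:ℂ) 1))
    (z : ℂ) (hz : z ∈ ball (0:ℂ) 1) :
    (1 - ‖z‖ ^ 2) * ‖deriv φ z‖ ≤ 1 - ‖φ z‖ ^ 2 := by
  have hzn : ‖z‖ < 1 := mem_ball_zero_iff.1 hz
  have hwmem : φ z ∈ ball (0:ℂ) 1 := hmap hz
  have hwn : ‖φ z‖ < 1 := mem_ball_zero_iff.1 hwmem
  set b := φ z with hb
  -- ψ = moeb b ∘ φ ∘ moeb z
  have hψd : DifferentiableOn ℂ (moeb b ∘ φ ∘ moeb z) (ball (0:ℂ) 1) :=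
    (moeb_diffOn b hwn).comp (hφ.comp (moeb_diffOn z hzn) (moeb_mapsTo z hzn))
      (hmap.comp (moeb_mapsTo z hzn))
  have hψmap : Set.MapsTo (moeb b ∘ φ ∘ moeb z) (ball (0:ℂ) 1) (ball (0:ℂ) 1) :=
    (moeb_mapsTo b hwn).comp (hmap.comp (moeb_mapsTo z hzn))
  have hψ0 : (moeb b ∘ φ ∘ moeb z) 0 = 0 := by
    simp [Function.comp, moeb_zero, moeb_self]; exact moeb_self b
  -- derivative of ψ at 0
  have h1 : HasDerivAt (moeb z) ((starRingEnd ℂ) z * z - 1) 0 := by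
    have := moeb_hasDerivAt z 0 hzn (by simp)
    simpa using this
  have hφz : HasDerivAt φ (deriv φ z) z :=
    (hφ.differentiableAt (isOpen_ball.mem_nhds hz)).hasDerivAt
  have hφz' : HasDerivAt φ (deriv φ z) (moeb z 0) := by rw [moeb_zero]; exact hφz
  have h2 : HasDerivAt (φ ∘ moeb z) (deriv φ z * ((starRingEnd ℂ) z * z - 1)) 0 :=
    hφz'.comp 0 h1
  have h3 : HasDerivAt (moeb b)
      (((starRingEnd ℂ) b * b - 1) / (1 - (starRingEnd ℂ) b * b) ^ 2) b :=
    moeb_hasDerivAt b b hwn hwn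
  have h4 : HasDerivAt (moeb b ∘ φ ∘ moeb z)
      (((starRingEnd ℂ) b * b - 1) / (1 - (starRingEnd ℂ) b * b) ^ 2 *
        (deriv φ z * ((starRingEnd ℂ) z * z - 1))) 0 := by
    have h3' : HasDerivAt (moeb b)
        (((starRingEnd ℂ) b * b - 1) / (1 - (starRingEnd ℂ) b * b) ^ 2) ((φ ∘ moeb z) 0) := by
      rw [show (φ ∘ moeb z) 0 = b by (simp [Function.comp, moeb_zero]; rfl)]; exact h3
    exact h3'.comp 0 h2
  -- Schwarz at center
  have hle : ‖deriv (moeb b ∘ φ ∘ moeb z) 0‖ ≤ 1 := by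
    have := Complex.norm_deriv_le_div_of_mapsTo_ball (R₂ := 1) hψd (by rw [hψ0]; exact hψmap.mono_right ball_subset_closedBall) (by norm_num : (0:ℝ) < 1)
    simpa using this
  rw [h4.deriv] at hle
  -- compute norms
  have hzz : (starRingEnd ℂ) z * z = ((‖z‖ ^ 2 : ℝ) : ℂ) := by
    rw [mul_comm]; exact_mod_cast RCLike.mul_conj z
  have hbb : (starRingEnd ℂ) b * b = ((‖b‖ ^ 2 : ℝ) : ℂ) := by
    rw [mul_comm]; exact_mod_cast RCLike.mul_conj b
  rw [hzz, hbb] at hle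
  have hbne : (1 : ℝ) - ‖b‖ ^ 2 ≠ 0 := by nlinarith [norm_nonneg b]
  have hy' : (1 : ℂ) - ((‖b‖ ^ 2 : ℝ) : ℂ) ≠ 0 := by
    rw [show (1:ℂ) - ((‖b‖^2:ℝ):ℂ) = (((1-‖b‖^2 : ℝ)):ℂ) by push_cast; ring]
    exact_mod_cast hbne
  have hsimp : (((‖b‖ ^ 2 : ℝ) : ℂ) - 1) / (1 - ((‖b‖ ^ 2 : ℝ) : ℂ)) ^ 2
      = -(1 / (1 - ((‖b‖ ^ 2 : ℝ) : ℂ))) := by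
    rw [show ((‖b‖^2:ℝ):ℂ) - 1 = -((1:ℂ) - ((‖b‖^2:ℝ):ℂ)) by ring, neg_div]
    congr 1
    rw [show ((1:ℂ) - ((‖b‖^2:ℝ):ℂ))^2 = ((1:ℂ) - ((‖b‖^2:ℝ):ℂ)) * ((1:ℂ) - ((‖b‖^2:ℝ):ℂ)) by ring,
      div_mul_cancel_left₀ hy', one_div]
  rw [hsimp] at hle
  have hnorm : ‖-(1 / (1 - ((‖b‖ ^ 2 : ℝ) : ℂ))) * (deriv φ z * (((‖z‖ ^ 2 : ℝ) : ℂ) - 1))‖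
      = (1 / (1 - ‖b‖ ^ 2)) * (‖deriv φ z‖ * (1 - ‖z‖ ^ 2)) := by
    rw [neg_mul, norm_neg, norm_mul, norm_mul, norm_div]
    congr 1
    · rw [norm_one]
      congr 1
      rw [show (1 : ℂ) - ((‖b‖ ^ 2 : ℝ) : ℂ) = (((1 - ‖b‖ ^ 2 : ℝ)) : ℂ) by push_cast; ring,
        Complex.norm_real, Real.norm_eq_abs, abs_of_pos (by nlinarith [norm_nonneg b])]
    · congr 1
      rw [show ((‖z‖ ^ 2 : ℝ) : ℂ) - 1 = (((‖z‖ ^ 2 - 1 : ℝ)) : ℂ) by push_cast; ring,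
        Complex.norm_real, Real.norm_eq_abs, abs_of_nonpos (by nlinarith [norm_nonneg z])]
      ring
  rw [hnorm] at hle
  have hbpos : (0:ℝ) < 1 - ‖b‖ ^ 2 := by nlinarith [norm_nonneg b]
  rw [div_mul_eq_mul_div, one_mul, div_le_one hbpos] at hle
  linarith [hle]

theorem stmt18 (h g H G φ : ℂ → ℂ)
    (hh : DifferentiableOn ℂ h (Metric.ball (0 : ℂ) 1))
    (hg : DifferentiableOn ℂ g (Metric.ball (0 : ℂ) 1))
    (hF : SPH H G) (hFfin : pbdd (PH H G))
    (hφ : DifferentiableOn ℂ φ (Metric.ball (0 : ℂ) 1))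
    (hφmap : Set.MapsTo φ (Metric.ball (0 : ℂ) 1) (Metric.ball (0 : ℂ) 1))
    (hsub : ∀ z ∈ Metric.ball (0 : ℂ) 1,
        deriv h z = deriv H (φ z) ∧ deriv g z = deriv G (φ z)) :
    (∀ z ∈ Metric.ball (0 : ℂ) 1, ‖deriv g z‖ < ‖deriv h z‖) ∧
    (∀ z ∈ Metric.ball (0 : ℂ) 1, PH h g z = PH H G (φ z) * deriv φ z) ∧
    pnorm (PH h g) ≤ pnorm (PH H G) := by
  have part1 : ∀ z ∈ ball (0:ℂ) 1, ‖deriv g z‖ < ‖deriv h z‖ := by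
    intro z hz
    rw [(hsub z hz).1, (hsub z hz).2]
    exact hF.2.2.2 (φ z) (hφmap hz)
  have hH' := (hF.1.analyticOnNhd isOpen_ball).deriv
  have hG' := (hF.2.1.analyticOnNhd isOpen_ball).deriv
  have part2 : ∀ z ∈ ball (0:ℂ) 1, PH h g z = PH H G (φ z) * deriv φ z := by
    intro z hz
    have hw : φ z ∈ ball (0:ℂ) 1 := hφmap hz
    have hφd : DifferentiableAt ℂ φ z := hφ.differentiableAt (isOpen_ball.mem_nhds hz)
    have hHd : DifferentiableAt ℂ (deriv H) (φ z) := (hH' (φ z) hw).differentiableAt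
    have hGd : DifferentiableAt ℂ (deriv G) (φ z) := (hG' (φ z) hw).differentiableAt
    have hHne : deriv H (φ z) ≠ 0 := by
      intro hcon
      have := hF.2.2.2 (φ z) hw
      rw [hcon, norm_zero] at this
      exact (norm_nonneg _).not_gt this
    have hev1 : deriv h =ᶠ[nhds z] (deriv H ∘ φ) :=
      (isOpen_ball.eventually_mem hz).mono fun y hy => (hsub y hy).1
    have hev2 : dil h g =ᶠ[nhds z] (dil H G ∘ φ) :=
      (isOpen_ball.eventually_mem hz).mono fun y hy => by
        simp only [dil, Function.comp, (hsub y hy).1, (hsub y hy).2]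
    have hd1 : deriv (deriv h) z = deriv (deriv H) (φ z) * deriv φ z := by
      rw [hev1.deriv_eq, deriv_comp z hHd hφd]
    have hdilHG : DifferentiableAt ℂ (dil H G) (φ z) := by
      have : DifferentiableAt ℂ (fun u => deriv G u / deriv H u) (φ z) :=
        hGd.div hHd hHne
      exact this
    have hd2 : deriv (dil h g) z = deriv (dil H G) (φ z) * deriv φ z := by
      rw [hev2.deriv_eq, deriv_comp z hdilHG hφd]
    have hdil : dil h g z = dil H G (φ z) := by
      simp only [dil, (hsub z hz).1, (hsub z hz).2]
    rw [PH, PH, pd, pd, hd1, hd2, hdil, (hsub z hz).1]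
    ring
  refine ⟨part1, part2, ?_⟩
  haveI : Nonempty (ball (0:ℂ) 1) := ⟨⟨0, by simp⟩⟩
  rw [pnorm, pnorm]
  apply ciSup_le
  rintro ⟨z, hz⟩
  have hw : φ z ∈ ball (0:ℂ) 1 := hφmap hz
  calc (1 - ‖z‖^2) * ‖PH h g z‖
      = ((1 - ‖z‖^2) * ‖deriv φ z‖) * ‖PH H G (φ z)‖ := by
        rw [part2 z hz, norm_mul]; ring
    _ ≤ (1 - ‖φ z‖^2) * ‖PH H G (φ z)‖ :=
        mul_le_mul_of_nonneg_right (schwarz_pick φ hφ hφmap z hz) (norm_nonneg _)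
    _ ≤ ⨆ z : Metric.ball (0 : ℂ) 1, (1 - ‖(z : ℂ)‖ ^ 2) * ‖PH H G (z : ℂ)‖ :=
        le_ciSup hFfin ⟨φ z, hw⟩
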